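/- Let q ≥ 2 be an even integer and n ≥ 1. Then the function f : ℤ_q^n → ℤ_{2q} defined by f(x_1,…,x_n) = x̂_1² + ⋯ + x̂_n² − x̂_1 − ⋯ − x̂_n (the integer value reduced modulo 2q) is 2q-negabent. -/

import Mathlib

open Finset

/-- `ω = e^{πi/q}`, a primitive `2q`-th root of unity. -/
noncomputable def omg (q : ℕ) : ℂ := Complex.exp ((Real.pi : ℂ) * Complex.I / q)

/-- `ξ = e^{2πi/q}`, a primitive `q`-th root of unity. -/
noncomputable def xiq (q : ℕ) : ℂ := Complex.exp (2 * (Real.pi : ℂ) * Complex.I / q)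

/-- The `2q`-nega-Hadamard transform of `f : ℤ_q^n → ℤ_{2q}` at `u ∈ ℤ_q^n`:
`N_f(u) = q^{-n/2} Σ_x ω^{f(x)} ξ^{⟨x̂,û⟩} ω^{Σ_i x̂_i}`. -/
noncomputable def NHT (q n : ℕ) [NeZero q] (f : (Fin n → ZMod q) → ZMod (2 * q))
    (u : Fin n → ZMod q) : ℂ :=
  (Real.sqrt ((q : ℝ) ^ n) : ℂ)⁻¹ *
    ∑ x : Fin n → ZMod q,
      omg q ^ (f x).val * xiq q ^ (∑ i, (x i).val * (u i).val) * omg q ^ (∑ i, (x i).val)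

/-- The `2q`-nega-crosscorrelation of `f, g : ℤ_q^m → ℤ_{2q}` at `u`:
`C_{f,g}(u) = Σ_x ω^{f(x) − g(x+u)} (−1)^{n_q(x̂,û)}`. -/
noncomputable def negaCC (q m : ℕ) [NeZero q]
    (f g : (Fin m → ZMod q) → ZMod (2 * q)) (u : Fin m → ZMod q) : ℂ :=
  ∑ x : Fin m → ZMod q,
    omg q ^ (f x - g (x + u)).val *
      (-1 : ℂ) ^ (Finset.univ.filter (fun i => q ≤ (x i).val + (u i).val)).card

set_option linter.unusedSectionVars false
set_option linter.unusedVariables false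

section aux
variable {q : ℕ} [NeZero q]

lemma omg_ne_zero : omg q ≠ 0 := Complex.exp_ne_zero _

lemma omg_pow_two_q : omg q ^ (2 * q) = 1 := by
  have hq : (q : ℂ) ≠ 0 := Nat.cast_ne_zero.mpr (NeZero.ne q)
  rw [omg, ← Complex.exp_nat_mul]
  rw [show ((2 * q : ℕ) : ℂ) * ((Real.pi : ℂ) * Complex.I / q) = 2 * Real.pi * Complex.I by
    push_cast; field_simp]
  exact Complex.exp_two_pi_mul_I

lemma W_cong {a b : ℤ} (h : a ≡ b [ZMOD (2 * q : ℕ)]) : omg q ^ a = omg q ^ b := by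
  obtain ⟨k, hk⟩ := h.dvd
  have hb : b = a + (2 * q : ℕ) * k := by linarith
  rw [hb, zpow_add₀ omg_ne_zero, zpow_mul, zpow_natCast, omg_pow_two_q, one_zpow, mul_one]

lemma abs_omg : ‖omg q‖ = 1 := by
  rw [omg, show (Real.pi : ℂ) * Complex.I / q = ((Real.pi / q : ℝ) : ℂ) * Complex.I by
    push_cast; ring]
  exact Complex.norm_exp_ofReal_mul_I _

lemma conj_omg : (starRingEnd ℂ) (omg q) = (omg q)⁻¹ := by
  rw [omg, ← Complex.exp_conj, ← Complex.exp_neg]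
  congr 1
  simp [map_div₀, Complex.conj_I]
  ring

lemma conj_W (m : ℤ) : (starRingEnd ℂ) (omg q ^ m) = omg q ^ (-m) := by
  rw [map_zpow₀, conj_omg, inv_zpow, zpow_neg]

lemma W_mul_conj (m : ℤ) : omg q ^ m * (starRingEnd ℂ) (omg q ^ m) = 1 := by
  rw [conj_W, ← zpow_add₀ omg_ne_zero, add_neg_cancel, zpow_zero]

lemma xiq_eq : xiq q = omg q ^ 2 := by
  rw [omg, xiq, ← Complex.exp_nat_mul]
  norm_num
  ring_nf

lemma zpow_sum' {x : ℂ} (hx : x ≠ 0) {ι : Type*} (s : Finset ι) (g : ι → ℤ) :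
    x ^ (∑ i ∈ s, g i) = ∏ i ∈ s, x ^ g i := by
  induction s using Finset.cons_induction with
  | empty => simp
  | cons a s ha ih => rw [Finset.sum_cons, Finset.prod_cons, zpow_add₀ hx, ih]

lemma key_cong (heven : Even q) {s t v : ℤ} (h : s ≡ t [ZMOD (q : ℤ)]) :
    s ^ 2 + 2 * s * v ≡ t ^ 2 + 2 * t * v [ZMOD ((2 * q : ℕ) : ℤ)] := by
  obtain ⟨k, hk⟩ := h.dvd
  obtain ⟨q', hq'⟩ := heven
  have hq2 : (q : ℤ) = q' + q' := by exact_mod_cast hq'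
  refine Int.modEq_iff_dvd.mpr ?_
  refine ⟨q' * k ^ 2 + k * s + k * v, ?_⟩
  have ht : t = s + (q : ℤ) * k := by linarith
  push_cast
  rw [ht, hq2]
  ring

end aux

noncomputable def Gq (q : ℕ) [NeZero q] (u a : ZMod q) : ℂ :=
  omg q ^ (((a.val : ℤ)) ^ 2 + 2 * (a.val : ℤ) * (u.val : ℤ))

section aux2
variable {q : ℕ} [NeZero q]

lemma val_add_modEq (a b : ZMod q) :
    (((a + b).val : ℤ)) ≡ (a.val : ℤ) + (b.val : ℤ) [ZMOD (q : ℤ)] := by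
  have h : (a + b).val = (a.val + b.val) % q := ZMod.val_add a b
  rw [show (((a + b).val : ℤ)) = ((a.val : ℤ) + b.val) % q by rw [h]; push_cast; ring]
  exact Int.emod_emod_of_dvd _ dvd_rfl

lemma G_zero (u : ZMod q) : Gq q u 0 = 1 := by
  simp [Gq, ZMod.val_zero]

lemma G_coord (heven : Even q) (v a b : ZMod q) :
    Gq q v (a + b) * (starRingEnd ℂ) (Gq q v a)
      = Gq q v b * omg q ^ (2 * (a.val : ℤ) * (b.val : ℤ)) := by
  unfold Gq
  rw [conj_W, W_cong (key_cong heven (val_add_modEq a b)), ← zpow_add₀ omg_ne_zero,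
    show (((a.val : ℤ) + (b.val : ℤ)) ^ 2 + 2 * ((a.val : ℤ) + (b.val : ℤ)) * (v.val : ℤ))
        + -((a.val : ℤ) ^ 2 + 2 * (a.val : ℤ) * (v.val : ℤ))
      = ((b.val : ℤ) ^ 2 + 2 * (b.val : ℤ) * (v.val : ℤ)) + 2 * (a.val : ℤ) * (b.val : ℤ) by
      ring,
    zpow_add₀ omg_ne_zero]

lemma xiq_pow_q : xiq q ^ q = 1 := by
  rw [xiq_eq, ← pow_mul, omg_pow_two_q]

lemma xiq_pow_ne_one {c : ℕ} (hc0 : 0 < c) (hcq : c < q) : xiq q ^ c ≠ 1 := by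
  intro h
  rw [xiq, ← Complex.exp_nat_mul, Complex.exp_eq_one_iff] at h
  obtain ⟨m, hm⟩ := h
  have hq : (q : ℂ) ≠ 0 := Nat.cast_ne_zero.mpr (NeZero.ne q)
  have hπ : (Real.pi : ℂ) ≠ 0 := Complex.ofReal_ne_zero.mpr Real.pi_ne_zero
  have h2 : (c : ℂ) * (2 * Real.pi * Complex.I) = (m * q) * (2 * Real.pi * Complex.I) := by
    field_simp at hm
    linear_combination (2 * (Real.pi : ℂ) * Complex.I) * hm
  have h3 : (c : ℂ) = (m * q : ℤ) := by
    have := mul_right_cancel₀ (by simp [hπ, Complex.I_ne_zero, two_ne_zero]) h2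
    push_cast
    exact this
  have h4 : (c : ℤ) = m * q := by exact_mod_cast h3
  have h5 : (q : ℤ) ∣ (c : ℤ) := ⟨m, by linarith⟩
  have h6 : (q : ℤ) ≤ (c : ℤ) := Int.le_of_dvd (by exact_mod_cast hc0) h5
  omega

lemma zmod_sum_val (g : ℕ → ℂ) : ∑ a : ZMod q, g a.val = ∑ j ∈ Finset.range q, g j := by
  refine Finset.sum_nbij' (fun a => a.val) (fun j => (j : ZMod q)) ?_ ?_ ?_ ?_ ?_
  · intro a _; exact Finset.mem_range.mpr (ZMod.val_lt a)
  · intro j _; exact Finset.mem_univ _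
  · intro a _; exact ZMod.natCast_rightInverse a
  · intro j hj; exact ZMod.val_cast_of_lt (Finset.mem_range.mp hj)
  · intro a _; rfl

lemma sum_xiq (d : ZMod q) :
    ∑ a : ZMod q, omg q ^ (2 * ((a.val : ℤ)) * ((d.val : ℤ))) = if d = 0 then (q : ℂ) else 0 := by
  have hterm : ∀ a : ZMod q,
      omg q ^ (2 * ((a.val : ℤ)) * ((d.val : ℤ))) = (xiq q ^ d.val) ^ a.val := by
    intro a
    rw [show (2 * ((a.val : ℤ)) * ((d.val : ℤ))) = ((2 : ℕ) : ℤ) * ((d.val * a.val : ℕ) : ℤ) by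
        push_cast; ring,
      zpow_mul, zpow_natCast, zpow_natCast, ← xiq_eq, pow_mul]
  rw [Finset.sum_congr rfl fun a _ => hterm a, zmod_sum_val (fun j => (xiq q ^ d.val) ^ j)]
  by_cases hd : d = 0
  · simp [hd, ZMod.val_zero]
  · rw [if_neg hd, geom_sum_eq (xiq_pow_ne_one (ZMod.val_pos.mpr hd) (ZMod.val_lt d)) q,
      ← pow_mul, mul_comm, pow_mul, xiq_pow_q, one_pow, sub_self, zero_div]

end aux2


/-- For even `q ≥ 2`, the function
`f(x) = x̂_1² + ⋯ + x̂_n² − x̂_1 − ⋯ − x̂_n (mod 2q)` is `2q`-negabent. -/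
theorem quadratic_negabent (q n : ℕ) [NeZero q] (hq : 2 ≤ q) (heven : Even q) (hn : 1 ≤ n) :
    ∀ u : Fin n → ZMod q,
      ‖NHT q n
        (fun x => ((∑ i, ((x i).val : ℤ) ^ 2 - ∑ i, ((x i).val : ℤ) : ℤ) : ZMod (2 * q))) u‖
        = 1 := by
  intro u
  haveI : NeZero (2 * q) := ⟨Nat.mul_ne_zero two_ne_zero (NeZero.ne q)⟩
  set S : ℂ := ∑ x : Fin n → ZMod q, ∏ i, Gq q (u i) (x i) with hS
  have hterm : ∀ x : Fin n → ZMod q,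
      omg q ^ (((∑ i, ((x i).val : ℤ) ^ 2 - ∑ i, ((x i).val : ℤ) : ℤ) : ZMod (2 * q)) : ZMod (2*q)).val
        * xiq q ^ (∑ i, (x i).val * (u i).val) * omg q ^ (∑ i, (x i).val)
        = ∏ i, Gq q (u i) (x i) := by
    intro x
    have hA : ((((∑ i, ((x i).val : ℤ) ^ 2 - ∑ i, ((x i).val : ℤ) : ℤ) : ZMod (2 * q)).val : ℤ))
        ≡ (∑ i, ((x i).val : ℤ) ^ 2 - ∑ i, ((x i).val : ℤ)) [ZMOD ((2 * q : ℕ) : ℤ)] := by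
      rw [ZMod.val_intCast]
      exact Int.emod_emod_of_dvd _ dvd_rfl
    have hxi : xiq q ^ (∑ i, (x i).val * (u i).val)
        = omg q ^ (2 * ((∑ i, (x i).val * (u i).val : ℕ) : ℤ)) := by
      rw [xiq_eq, ← pow_mul, ← zpow_natCast]
      norm_cast
    rw [hxi, ← zpow_natCast (omg q) (((∑ i, ((x i).val : ℤ) ^ 2 - ∑ i, ((x i).val : ℤ) : ℤ) : ZMod (2 * q)) : ZMod (2*q)).val,
      ← zpow_natCast (omg q) (∑ i, (x i).val), ← zpow_add₀ omg_ne_zero, ← zpow_add₀ omg_ne_zero,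
      W_cong ((hA.add_right _).add_right _)]
    have hexp : (∑ i, ((x i).val : ℤ) ^ 2 - ∑ i, ((x i).val : ℤ))
          + 2 * ((∑ i, (x i).val * (u i).val : ℕ) : ℤ) + ((∑ i, (x i).val : ℕ) : ℤ)
        = ∑ i, (((x i).val : ℤ) ^ 2 + 2 * ((x i).val : ℤ) * ((u i).val : ℤ)) := by
      push_cast
      rw [Finset.sum_add_distrib, Finset.mul_sum,
        Finset.sum_congr rfl (fun i _ => (mul_assoc (2 : ℤ) ((x i).val : ℤ) ((u i).val : ℤ)).symm)]
      ring
    rw [hexp, zpow_sum' omg_ne_zero]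
    rfl
  have hNHT : NHT q n
      (fun x => ((∑ i, ((x i).val : ℤ) ^ 2 - ∑ i, ((x i).val : ℤ) : ℤ) : ZMod (2 * q))) u
      = ((Real.sqrt ((q : ℝ) ^ n) : ℝ) : ℂ)⁻¹ * S := by
    rw [NHT, hS]
    congr 1
    exact Finset.sum_congr rfl fun x _ => hterm x
  have hcoordp : ∀ (y d : Fin n → ZMod q),
      (∏ i, Gq q (u i) ((y + d) i)) * (∏ i, (starRingEnd ℂ) (Gq q (u i) (y i)))
      = ∏ i, (Gq q (u i) (d i) * omg q ^ (2 * (((y i).val : ℤ)) * (((d i).val : ℤ)))) := by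
    intro y d
    rw [← Finset.prod_mul_distrib]
    exact Finset.prod_congr rfl fun i _ => G_coord heven (u i) (y i) (d i)
  have hinner : ∀ d : Fin n → ZMod q,
      ∑ y : Fin n → ZMod q,
          ∏ i, (Gq q (u i) (d i) * omg q ^ (2 * (((y i).val : ℤ)) * (((d i).val : ℤ))))
      = (∏ i, Gq q (u i) (d i)) * ∏ i, (if d i = 0 then (q : ℂ) else 0) := by
    intro d
    rw [Finset.sum_congr rfl fun y _ => Finset.prod_mul_distrib, ← Finset.mul_sum]
    congr 1
    calc ∑ y : Fin n → ZMod q, ∏ i, omg q ^ (2 * (((y i).val : ℤ)) * (((d i).val : ℤ)))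
        = ∏ i, ∑ a : ZMod q, omg q ^ (2 * ((a.val : ℤ)) * (((d i).val : ℤ))) :=
          (Fintype.prod_sum fun i (a : ZMod q) =>
            omg q ^ (2 * ((a.val : ℤ)) * (((d i).val : ℤ)))).symm
      _ = ∏ i, (if d i = 0 then (q : ℂ) else 0) :=
          Finset.prod_congr rfl fun i _ => sum_xiq (d i)
  have key : S * (starRingEnd ℂ) S = (q : ℂ) ^ n := by
    rw [hS, map_sum]
    simp only [map_prod]
    rw [Finset.sum_mul_sum, Finset.sum_comm]
    have hre : ∀ y : Fin n → ZMod q,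
        ∑ x : Fin n → ZMod q,
            (∏ i, Gq q (u i) (x i)) * (∏ i, (starRingEnd ℂ) (Gq q (u i) (y i)))
        = ∑ d : Fin n → ZMod q,
            ∏ i, (Gq q (u i) (d i) * omg q ^ (2 * (((y i).val : ℤ)) * (((d i).val : ℤ)))) := by
      intro y
      rw [← Equiv.sum_comp (Equiv.addLeft y)
        (fun x => (∏ i, Gq q (u i) (x i)) * (∏ i, (starRingEnd ℂ) (Gq q (u i) (y i))))]
      exact Finset.sum_congr rfl fun d _ => hcoordp y d
    rw [Finset.sum_congr rfl fun y _ => hre y, Finset.sum_comm,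
      Finset.sum_congr rfl fun d _ => hinner d]
    have hz : ∀ d : Fin n → ZMod q, d ≠ 0 →
        (∏ i, Gq q (u i) (d i)) * (∏ i, if d i = 0 then (q : ℂ) else 0) = 0 := by
      intro d hd
      obtain ⟨i, hi⟩ := Function.ne_iff.mp hd
      simp only [Pi.zero_apply] at hi
      exact mul_eq_zero_of_right _ (Finset.prod_eq_zero (Finset.mem_univ i)
        (show (if d i = 0 then (q : ℂ) else 0) = 0 from if_neg hi))
    rw [Fintype.sum_eq_single 0 hz]
    simp [G_zero]
  have hnormSq : Complex.normSq S = (q : ℝ) ^ n := by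
    have h := key
    rw [Complex.mul_conj] at h
    exact_mod_cast h
  have hq0 : (0 : ℝ) < (q : ℝ) := by
    have : 0 < q := by omega
    exact_mod_cast this
  have hqpos : (0 : ℝ) < (q : ℝ) ^ n := pow_pos hq0 n
  rw [hNHT, norm_mul, norm_inv, Complex.norm_real, Real.norm_of_nonneg (Real.sqrt_nonneg _),
    Complex.norm_def, hnormSq, inv_mul_cancel₀ (ne_of_gt (Real.sqrt_pos.mpr hqpos))]
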